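/- Let N ≥ 1, B ≥ 0, V ≥ 0, V_T ≥ 0, W ≥ 1 and T ≥ 1. For each i ∈ {1,…,N} let Q_i, a_i, b_i, a*_i, b*_i satisfy Q_i(0) = 0, Q_i(t+1) = max(Q_i(t) + a_i(t) − b_i(t), 0), and 0 ≤ a_i(t), b_i(t), a*_i(t), b*_i(t) ≤ B for t ∈ {0,…,T−1}. Let U, U* take values in [U_min, U_max], suppose the Drift-plus-Penalty property holds at every slot t < T (Σ_{i} Q_i(t)(b_i(t) − a_i(t)) + V·U(t) ≥ Σ_{i} Q_i(t)(b*_i(t) − a*_i(t)) + V·U*(t)), and suppose the comparator satisfies the V_T-window constraint Σ_{τ=t}^{t+W−1} (a*_i(τ) − b*_i(τ)) ≤ V_T for every i and every t that is a multiple of W with t + W ≤ T. Then for every T' ≤ T that is a multiple of W, (Σ_{i=1}^N Q_i(T'))² / (2N) ≤ (V_T·T'/W) · max_{0 ≤ t ≤ T'} Σ_{i=1}^N Q_i(t) + V·T'·(U_max − U_min) + 7·N·B²·W·T'. -/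

import Mathlib

open Finset

/-- Quadratic inequality for the peak queue length of the Drift-plus-Penalty algorithm
under the `V_T`-constrained adversary model (derived from eq:general-1 in Appendix E). -/
theorem DPP_quadratic_ineq_VT (N : ℕ) (hN : 1 ≤ N) (B : ℝ) (hB : 0 ≤ B)
    (V : ℝ) (hV : 0 ≤ V) (VT : ℝ) (hVT : 0 ≤ VT) (W T : ℕ) (hW : 1 ≤ W) (hT : 1 ≤ T)
    (Q a b astar bstar : Fin N → ℕ → ℝ) (U Ustar : ℕ → ℝ) (Umin Umax : ℝ)
    (hQ0 : ∀ i, Q i 0 = 0)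
    (hrec : ∀ i t, Q i (t + 1) = max (Q i t + a i t - b i t) 0)
    (hbnd : ∀ i, ∀ t < T, (0 ≤ a i t ∧ a i t ≤ B) ∧ (0 ≤ b i t ∧ b i t ≤ B) ∧
      (0 ≤ astar i t ∧ astar i t ≤ B) ∧ (0 ≤ bstar i t ∧ bstar i t ≤ B))
    (hU : ∀ t < T, Umin ≤ U t ∧ U t ≤ Umax)
    (hUstar : ∀ t < T, Umin ≤ Ustar t ∧ Ustar t ≤ Umax)
    (hDPP : ∀ t < T, (∑ i, Q i t * (b i t - a i t)) + V * U t ≥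
      (∑ i, Q i t * (bstar i t - astar i t)) + V * Ustar t)
    (hwindow : ∀ t : ℕ, W ∣ t → t + W ≤ T → ∀ i,
      (∑ τ ∈ Finset.Ico t (t + W), (astar i τ - bstar i τ)) ≤ VT)
    (T' : ℕ) (hT' : T' ≤ T) (hWT' : W ∣ T') :
    (∑ i, Q i T') ^ 2 / (2 * (N : ℝ)) ≤
      (VT * (T' : ℝ) / (W : ℝ)) *
        ((Finset.range (T' + 1)).sup' Finset.nonempty_range_add_one (fun t => ∑ i, Q i t))
      + V * (T' : ℝ) * (Umax - Umin) + 7 * (N : ℝ) * B ^ 2 * (W : ℝ) * (T' : ℝ) := by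
  set M : ℝ := (Finset.range (T' + 1)).sup' Finset.nonempty_range_add_one (fun t => ∑ i, Q i t)
    with hM
  set S : ℕ → ℝ := fun t => ∑ i, Q i t ^ 2 with hS
  have hQnn : ∀ i t, 0 ≤ Q i t := by
    intro i t
    cases t with
    | zero => simp [hQ0]
    | succ n => rw [hrec]; exact le_max_right _ _
  -- one-step change bound
  have hstep : ∀ i, ∀ t, t < T → |Q i (t + 1) - Q i t| ≤ B := by
    intro i t ht
    obtain ⟨⟨ha0, haB⟩, ⟨hb0, hbB⟩, _⟩ := hbnd i t ht
    rw [abs_sub_le_iff]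
    constructor
    · rw [hrec]
      have h1 : Q i t + a i t - b i t ≤ Q i t + B := by linarith
      have h2 : (0 : ℝ) ≤ Q i t + B := by have := hQnn i t; linarith
      have := max_le h1 h2
      linarith
    · rw [hrec]
      have : Q i t + a i t - b i t ≤ max (Q i t + a i t - b i t) 0 := le_max_left _ _
      linarith
  have hdev : ∀ i s d, s + d ≤ T → |Q i (s + d) - Q i s| ≤ (d : ℝ) * B := by
    intro i s d
    induction d with
    | zero => simp
    | succ n ih =>
      intro h
      have h1 : s + n ≤ T := by omega
      have h2 : s + n < T := by omega
      have e : s + (n + 1) = (s + n) + 1 := by omega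
      calc |Q i (s + (n + 1)) - Q i s|
          ≤ |Q i ((s + n) + 1) - Q i (s + n)| + |Q i (s + n) - Q i s| := by
            rw [e]; exact abs_sub_le _ _ _
        _ ≤ B + (n : ℝ) * B := add_le_add (hstep i (s + n) h2) (ih h1)
        _ = ((n + 1 : ℕ) : ℝ) * B := by push_cast; ring
  -- per-slot drift bound
  have hdrift : ∀ t, t < T → S (t + 1) ≤ S t +
      2 * (∑ i, Q i t * (astar i t - bstar i t)) + 2 * V * (Umax - Umin)
      + (N : ℝ) * B ^ 2 := by
    intro t ht
    have hper : ∀ i, Q i (t + 1) ^ 2 ≤ Q i t ^ 2 + 2 * (Q i t * (a i t - b i t)) + B ^ 2 := by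
      intro i
      obtain ⟨⟨ha0, haB⟩, ⟨hb0, hbB⟩, _⟩ := hbnd i t ht
      have h1 : Q i (t + 1) ^ 2 ≤ (Q i t + a i t - b i t) ^ 2 := by
        rw [hrec]
        rcases le_or_gt (Q i t + a i t - b i t) 0 with h | h
        · rw [max_eq_right h]; simpa using sq_nonneg (Q i t + a i t - b i t)
        · rw [max_eq_left h.le]
      nlinarith
    have hsum : S (t + 1) ≤ S t + 2 * (∑ i, Q i t * (a i t - b i t)) + (N : ℝ) * B ^ 2 := by
      calc S (t + 1) ≤ ∑ i, (Q i t ^ 2 + 2 * (Q i t * (a i t - b i t)) + B ^ 2) :=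
            Finset.sum_le_sum (fun i _ => hper i)
        _ = S t + 2 * (∑ i, Q i t * (a i t - b i t)) + (N : ℝ) * B ^ 2 := by
            rw [Finset.sum_add_distrib, Finset.sum_add_distrib, ← Finset.mul_sum]
            simp [hS, Finset.card_univ, mul_comm]
    have hD := hDPP t ht
    obtain ⟨hU1, hU2⟩ := hU t ht
    obtain ⟨hV1, hV2⟩ := hUstar t ht
    have e1 : (∑ i, Q i t * (a i t - b i t)) + (∑ i, Q i t * (b i t - a i t)) = 0 := by
      rw [← Finset.sum_add_distrib]
      apply Finset.sum_eq_zero; intros; ring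
    have e2 : (∑ i, Q i t * (astar i t - bstar i t))
        + (∑ i, Q i t * (bstar i t - astar i t)) = 0 := by
      rw [← Finset.sum_add_distrib]
      apply Finset.sum_eq_zero; intros; ring
    have hVU : V * (U t - Ustar t) ≤ V * (Umax - Umin) :=
      mul_le_mul_of_nonneg_left (by linarith) hV
    have hkey : (∑ i, Q i t * (a i t - b i t)) ≤
        (∑ i, Q i t * (astar i t - bstar i t)) + V * (Umax - Umin) := by
      nlinarith [hD]
    linarith
  -- telescoping
  have htel : ∀ n, n ≤ T → S n ≤
      (∑ t ∈ Finset.range n, 2 * (∑ i, Q i t * (astar i t - bstar i t)))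
      + (n : ℝ) * (2 * V * (Umax - Umin) + (N : ℝ) * B ^ 2) := by
    intro n
    induction n with
    | zero => intro _; simp [hS, hQ0]
    | succ m ih =>
      intro h
      rw [Finset.sum_range_succ]
      have h1 := hdrift m (by omega)
      have h2 := ih (by omega)
      push_cast
      linarith
  -- window decomposition
  obtain ⟨K, hK⟩ := hWT'
  have hsplit : ∀ (g : ℕ → ℝ) (K0 : ℕ), ∑ t ∈ Finset.range (W * K0), g t
      = ∑ k ∈ Finset.range K0, ∑ t ∈ Finset.Ico (W * k) (W * k + W), g t := by
    intro g K0
    induction K0 with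
    | zero => simp
    | succ m ih =>
      rw [Finset.sum_range_succ, ← ih, Finset.range_eq_Ico, Nat.mul_succ,
        ← Finset.sum_Ico_consecutive g (Nat.zero_le (W * m)) (Nat.le_add_right (W * m) W), ← Finset.range_eq_Ico]
  -- per-window bound
  have hMle : ∀ t, t ≤ T' → (∑ i, Q i t) ≤ M := by
    intro t ht
    exact Finset.le_sup' (fun t => ∑ i, Q i t) (Finset.mem_range.mpr (by omega))
  have hwin : ∀ k, k < K →
      (∑ t ∈ Finset.Ico (W * k) (W * k + W), (∑ i, Q i t * (astar i t - bstar i t)))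
      ≤ VT * M + (N : ℝ) * (W : ℝ) ^ 2 * B ^ 2 := by
    intro k hk
    have hkT' : W * k + W ≤ T' := by
      rw [hK]
      calc W * k + W = W * (k + 1) := by ring
        _ ≤ W * K := Nat.mul_le_mul_left W (by omega)
    have hkT : W * k + W ≤ T := le_trans hkT' hT'
    have hwd := hwindow (W * k) ⟨k, rfl⟩ hkT
    rw [Finset.sum_comm]
    have hone : ∀ i : Fin N,
        (∑ t ∈ Finset.Ico (W * k) (W * k + W), Q i t * (astar i t - bstar i t))
        ≤ Q i (W * k) * VT + (W : ℝ) * ((W : ℝ) * B * B) := by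
      intro i
      have hsplit2 : ∀ t ∈ Finset.Ico (W * k) (W * k + W),
          Q i t * (astar i t - bstar i t)
          = Q i (W * k) * (astar i t - bstar i t)
            + (Q i t - Q i (W * k)) * (astar i t - bstar i t) := by
        intro t _; ring
      rw [Finset.sum_congr rfl hsplit2, Finset.sum_add_distrib, ← Finset.mul_sum]
      have h1 : Q i (W * k) * (∑ t ∈ Finset.Ico (W * k) (W * k + W),
          (astar i t - bstar i t)) ≤ Q i (W * k) * VT :=
        mul_le_mul_of_nonneg_left (hwd i) (hQnn i (W * k))
      have h2 : (∑ t ∈ Finset.Ico (W * k) (W * k + W),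
          (Q i t - Q i (W * k)) * (astar i t - bstar i t)) ≤ (W : ℝ) * ((W : ℝ) * B * B) := by
        calc (∑ t ∈ Finset.Ico (W * k) (W * k + W),
            (Q i t - Q i (W * k)) * (astar i t - bstar i t))
            ≤ ∑ t ∈ Finset.Ico (W * k) (W * k + W), (W : ℝ) * B * B := by
              apply Finset.sum_le_sum
              intro t htm
              rw [Finset.mem_Ico] at htm
              obtain ⟨hlo, hhi⟩ := htm
              have htT : t < T := by omega
              obtain ⟨_, _, ⟨has0, hasB⟩, ⟨hbs0, hbsB⟩⟩ := hbnd i t htT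
              have habs : |astar i t - bstar i t| ≤ B := by
                rw [abs_sub_le_iff]; constructor <;> linarith
              have hd : t = W * k + (t - W * k) := by omega
              have hdevt : |Q i t - Q i (W * k)| ≤ (W : ℝ) * B := by
                calc |Q i t - Q i (W * k)| = |Q i (W * k + (t - W * k)) - Q i (W * k)| := by
                      rw [← hd]
                  _ ≤ ((t - W * k : ℕ) : ℝ) * B := hdev i (W * k) (t - W * k) (by omega)
                  _ ≤ (W : ℝ) * B := by
                      apply mul_le_mul_of_nonneg_right _ hB
                      exact_mod_cast Nat.le_of_lt (by omega)
              calc (Q i t - Q i (W * k)) * (astar i t - bstar i t)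
                  ≤ |(Q i t - Q i (W * k)) * (astar i t - bstar i t)| := le_abs_self _
                _ = |Q i t - Q i (W * k)| * |astar i t - bstar i t| := abs_mul _ _
                _ ≤ (W : ℝ) * B * B := by
                    apply mul_le_mul hdevt habs (abs_nonneg _) (by positivity)
          _ = (W : ℝ) * ((W : ℝ) * B * B) := by
              rw [Finset.sum_const, Nat.card_Ico, Nat.add_sub_cancel_left, nsmul_eq_mul]
      linarith
    calc (∑ i, ∑ t ∈ Finset.Ico (W * k) (W * k + W), Q i t * (astar i t - bstar i t))
        ≤ ∑ i, (Q i (W * k) * VT + (W : ℝ) * ((W : ℝ) * B * B)) :=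
          Finset.sum_le_sum (fun i _ => hone i)
      _ = (∑ i, Q i (W * k)) * VT + (N : ℝ) * ((W : ℝ) * ((W : ℝ) * B * B)) := by
          rw [Finset.sum_add_distrib, ← Finset.sum_mul]
          simp [Finset.card_univ]
      _ ≤ VT * M + (N : ℝ) * (W : ℝ) ^ 2 * B ^ 2 := by
          have := hMle (W * k) (by omega)
          have h3 : (∑ i, Q i (W * k)) * VT ≤ M * VT :=
            mul_le_mul_of_nonneg_right this hVT
          nlinarith [this]
  -- combine
  have hST : S T' ≤ 2 * (K : ℝ) * (VT * M + (N : ℝ) * (W : ℝ) ^ 2 * B ^ 2)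
      + (T' : ℝ) * (2 * V * (Umax - Umin) + (N : ℝ) * B ^ 2) := by
    have h1 := htel T' hT'
    have h2 : (∑ t ∈ Finset.range T', 2 * (∑ i, Q i t * (astar i t - bstar i t)))
        ≤ 2 * (K : ℝ) * (VT * M + (N : ℝ) * (W : ℝ) ^ 2 * B ^ 2) := by
      rw [hK, hsplit]
      calc (∑ k ∈ Finset.range K, ∑ t ∈ Finset.Ico (W * k) (W * k + W),
          2 * (∑ i, Q i t * (astar i t - bstar i t)))
          ≤ ∑ k ∈ Finset.range K, 2 * (VT * M + (N : ℝ) * (W : ℝ) ^ 2 * B ^ 2) := by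
            apply Finset.sum_le_sum
            intro k hkm
            rw [Finset.mem_range] at hkm
            rw [← Finset.mul_sum]
            have := hwin k hkm
            linarith
        _ = 2 * (K : ℝ) * (VT * M + (N : ℝ) * (W : ℝ) ^ 2 * B ^ 2) := by
            rw [Finset.sum_const, Finset.card_range]
            simp; ring
    linarith
  -- Cauchy–Schwarz and final arithmetic
  have hNpos : (0 : ℝ) < (N : ℝ) := by exact_mod_cast hN
  have hcs : (∑ i, Q i T') ^ 2 ≤ (N : ℝ) * S T' := by
    have := sq_sum_le_card_mul_sum_sq (s := (Finset.univ : Finset (Fin N)))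
      (f := fun i => Q i T')
    simpa [Finset.card_univ, hS] using this
  have hKW : ((T' : ℝ)) = (W : ℝ) * (K : ℝ) := by exact_mod_cast congrArg Nat.cast hK
  have hWpos : (0 : ℝ) < (W : ℝ) := by exact_mod_cast hW
  have hfrac : VT * (T' : ℝ) / (W : ℝ) = VT * (K : ℝ) := by
    rw [hKW]; field_simp
  have hmain : S T' / 2 ≤ VT * (T' : ℝ) / (W : ℝ) * M + V * (T' : ℝ) * (Umax - Umin)
      + 7 * (N : ℝ) * B ^ 2 * (W : ℝ) * (T' : ℝ) := by
    rw [hfrac]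
    have hW1 : (1 : ℝ) ≤ (W : ℝ) := by exact_mod_cast hW
    have hT'nn : (0 : ℝ) ≤ (T' : ℝ) := Nat.cast_nonneg _
    have hc : (0 : ℝ) ≤ (N : ℝ) * B ^ 2 := by positivity
    have h1 : (K : ℝ) * ((N : ℝ) * (W : ℝ) ^ 2 * B ^ 2)
        = (N : ℝ) * B ^ 2 * ((W : ℝ) * (T' : ℝ)) := by rw [hKW]; ring
    have h2 : (N : ℝ) * B ^ 2 * (T' : ℝ) ≤ (N : ℝ) * B ^ 2 * ((W : ℝ) * (T' : ℝ)) := by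
      apply mul_le_mul_of_nonneg_left _ hc
      nlinarith [hT'nn, hW1]
    have h3 : (0 : ℝ) ≤ (N : ℝ) * B ^ 2 * ((W : ℝ) * (T' : ℝ)) := by positivity
    linarith [hST, h1, h2, h3]
  calc (∑ i, Q i T') ^ 2 / (2 * (N : ℝ)) ≤ ((N : ℝ) * S T') / (2 * (N : ℝ)) := by
        apply div_le_div_of_nonneg_right hcs
        positivity
    _ = S T' / 2 := by field_simp
    _ ≤ _ := hmain
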